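/- Let μ be a nonzero positive finite Borel measure on [0,1] and define Φ(s) = ∫₀¹ s^α dμ(α) for s ∈ ℂ∖(−∞,0], where s^α = exp(α·Log s) with the principal logarithm. Then for every s = R·e^{iθ} with R > 0 and |θ| < π one has cos(|θ|/2)·min(1,R)·μ([0,1]) ≤ |Φ(s)| ≤ max(1,R)·μ([0,1]). In particular Φ has no zeros in ℂ∖(−∞,0]. -/

import Mathlib

open MeasureTheory Complex Set

/-- `Phi μ s = ∫₀¹ s^α dμ(α)`, with the principal branch of the complex power. -/
noncomputable def Phi (μ : Measure ℝ) (s : ℂ) : ℂ :=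
  ∫ α in Set.Icc (0:ℝ) 1, s ^ (α : ℂ) ∂μ

theorem stmt_0 (μ : Measure ℝ) [IsFiniteMeasure μ] (hμ : μ ≠ 0)
    (hsupp : μ (Set.Icc (0:ℝ) 1)ᶜ = 0)
    (R θ : ℝ) (hR : 0 < R) (hθ : |θ| < Real.pi) :
    Real.cos (|θ| / 2) * min 1 R * (μ (Set.Icc (0:ℝ) 1)).toReal
       ≤ ‖Phi μ ((R : ℂ) * Complex.exp ((θ : ℂ) * Complex.I))‖
    ∧ ‖Phi μ ((R : ℂ) * Complex.exp ((θ : ℂ) * Complex.I))‖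
       ≤ max 1 R * (μ (Set.Icc (0:ℝ) 1)).toReal
    ∧ Phi μ ((R : ℂ) * Complex.exp ((θ : ℂ) * Complex.I)) ≠ 0 := by
  set s : ℂ := (R : ℂ) * Complex.exp ((θ : ℂ) * Complex.I) with hs
  have hθπ : -Real.pi < θ ∧ θ < Real.pi := abs_lt.mp hθ
  have hsabs : ‖s‖ = R := by
    rw [hs, norm_mul, Complex.norm_exp]
    simp [abs_of_pos hR]
  have hs0 : s ≠ 0 := by
    intro h
    rw [h] at hsabs
    simp at hsabs
    exact hR.ne' hsabs.symm
  have harg : Complex.arg s = θ := by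
    rw [hs, Complex.exp_mul_I]
    exact Complex.arg_mul_cos_add_sin_mul_I hR ⟨hθπ.1, hθπ.2.le⟩
  have hlog : Complex.log s = (Real.log R : ℂ) + θ * Complex.I := by
    rw [Complex.log, hsabs, harg]
  have key : ∀ x : ℝ, s ^ (x : ℂ)
      = ((R ^ x : ℝ) : ℂ) * Complex.exp (((x * θ : ℝ) : ℂ) * Complex.I) := by
    intro x
    rw [Complex.cpow_def_of_ne_zero hs0, hlog, Real.rpow_def_of_pos hR,
      Complex.ofReal_exp, ← Complex.exp_add]
    push_cast
    ring_nf
  have habs_pow : ∀ x : ℝ, ‖s ^ (x : ℂ)‖ = R ^ x := by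
    intro x
    rw [key x, norm_mul, Complex.norm_exp, Complex.norm_real, Real.norm_eq_abs,
      _root_.abs_of_nonneg (Real.rpow_nonneg hR.le x)]
    simp
  have hcont : Continuous fun x : ℝ => s ^ (x : ℂ) :=
    Continuous.const_cpow Complex.continuous_ofReal (Or.inl hs0)
  have hint : IntegrableOn (fun x : ℝ => s ^ (x : ℂ)) (Set.Icc 0 1) μ :=
    hcont.continuousOn.integrableOn_compact isCompact_Icc
  -- bounds on R ^ x
  have hminmax : ∀ x ∈ Set.Icc (0:ℝ) 1, min 1 R ≤ R ^ x ∧ R ^ x ≤ max 1 R := by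
    intro x hx
    rcases le_total R 1 with h1 | h1
    · constructor
      · calc min 1 R ≤ R := min_le_right _ _
          _ = R ^ (1:ℝ) := (Real.rpow_one R).symm
          _ ≤ R ^ x := Real.rpow_le_rpow_of_exponent_ge hR h1 hx.2
      · calc R ^ x ≤ 1 := Real.rpow_le_one hR.le h1 hx.1
          _ ≤ max 1 R := le_max_left _ _
    · constructor
      · calc min 1 R ≤ 1 := min_le_left _ _
          _ ≤ R ^ x := Real.one_le_rpow h1 hx.1
      · calc R ^ x ≤ R ^ (1:ℝ) := Real.rpow_le_rpow_of_exponent_le h1 hx.2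
          _ = R := Real.rpow_one R
          _ ≤ max 1 R := le_max_right _ _
  -- Upper bound
  have hupper : ‖Phi μ s‖ ≤ max 1 R * (μ (Set.Icc (0:ℝ) 1)).toReal := by
    have h1 : ‖Phi μ s‖ ≤ ∫ x in Set.Icc (0:ℝ) 1, ‖s ^ (x:ℂ)‖ ∂μ := by
      simpa [Phi] using
        norm_integral_le_integral_norm (μ := μ.restrict (Set.Icc (0:ℝ) 1))
          (fun x : ℝ => s ^ (x:ℂ))
    refine h1.trans ?_
    have h2 : ∫ x in Set.Icc (0:ℝ) 1, ‖s ^ (x:ℂ)‖ ∂μ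
        ≤ ∫ _x in Set.Icc (0:ℝ) 1, max 1 R ∂μ := by
      refine setIntegral_mono_on ?_ (integrableOn_const (measure_ne_top _ _))
        measurableSet_Icc ?_
      · exact hint.norm
      · intro x hx
        rw [habs_pow x]
        exact (hminmax x hx).2
    simpa [smul_eq_mul, mul_comm, measureReal_def] using h2
  -- Lower bound
  set c : ℂ := Complex.exp (-((θ/2 : ℝ) : ℂ) * Complex.I) with hc
  have habs_c : ‖c‖ = 1 := by
    rw [hc, Complex.norm_exp]; simp
  have hkey2 : ∀ x : ℝ, c * s ^ (x : ℂ)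
      = ((R ^ x : ℝ) : ℂ) * Complex.exp (((x * θ - θ/2 : ℝ) : ℂ) * Complex.I) := by
    intro x
    rw [key x, hc, mul_left_comm, ← Complex.exp_add]
    push_cast
    ring_nf
  have hre_point : ∀ x : ℝ, (c * s ^ (x : ℂ)).re = R ^ x * Real.cos (x * θ - θ/2) := by
    intro x
    rw [hkey2 x, Complex.re_ofReal_mul, Complex.exp_ofReal_mul_I_re]
  have hcos_bound : ∀ x ∈ Set.Icc (0:ℝ) 1,
      Real.cos (|θ|/2) ≤ Real.cos (x * θ - θ/2) := by
    intro x hx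
    have h1 : |x * θ - θ/2| ≤ |θ|/2 := by
      have : x * θ - θ/2 = (x - 1/2) * θ := by ring
      rw [this, abs_mul]
      have hx2 : |x - 1/2| ≤ 1/2 := by
        rw [abs_le]; constructor <;> nlinarith [hx.1, hx.2]
      calc |x - 1/2| * |θ| ≤ (1/2) * |θ| :=
            mul_le_mul_of_nonneg_right hx2 (abs_nonneg θ)
        _ = |θ|/2 := by ring
    calc Real.cos (|θ|/2) ≤ Real.cos |x * θ - θ/2| :=
          Real.cos_le_cos_of_nonneg_of_le_pi (abs_nonneg _)
            (by linarith [Real.pi_pos]) h1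
      _ = Real.cos (x * θ - θ/2) := Real.cos_abs _
  have hcospos : 0 < Real.cos (|θ|/2) := by
    apply Real.cos_pos_of_mem_Ioo
    constructor
    · linarith [Real.pi_pos, abs_nonneg θ]
    · linarith
  have hintc : IntegrableOn (fun x : ℝ => c * s ^ (x : ℂ)) (Set.Icc 0 1) μ :=
    hint.const_mul c
  have hre_int : (c * Phi μ s).re
      = ∫ x in Set.Icc (0:ℝ) 1, R ^ x * Real.cos (x * θ - θ/2) ∂μ := by
    have h := integral_re hintc
    simp only [RCLike.re_to_complex] at h
    rw [Phi, ← integral_const_mul, ← h]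
    exact integral_congr_ae (Filter.Eventually.of_forall fun x => hre_point x)
  have hlower_re : Real.cos (|θ|/2) * min 1 R * (μ (Set.Icc (0:ℝ) 1)).toReal
      ≤ (c * Phi μ s).re := by
    rw [hre_int]
    have h3 : ∫ _x in Set.Icc (0:ℝ) 1, Real.cos (|θ|/2) * min 1 R ∂μ
        ≤ ∫ x in Set.Icc (0:ℝ) 1, R ^ x * Real.cos (x * θ - θ/2) ∂μ := by
      refine setIntegral_mono_on (integrableOn_const (measure_ne_top _ _))
        ?_ measurableSet_Icc ?_
      · have hcont2 : Continuous fun x : ℝ => R ^ x * Real.cos (x * θ - θ/2) := by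
          refine Continuous.mul ?_ (Real.continuous_cos.comp (by continuity))
          exact continuous_const.rpow continuous_id fun _ => Or.inl hR.ne'
        exact hcont2.continuousOn.integrableOn_compact isCompact_Icc
      · intro x hx
        have h4 := (hminmax x hx).1
        have h5 := hcos_bound x hx
        have hmin0 : 0 ≤ min 1 R := le_min zero_le_one hR.le
        calc Real.cos (|θ|/2) * min 1 R ≤ Real.cos (x*θ - θ/2) * min 1 R :=
              mul_le_mul_of_nonneg_right h5 hmin0
          _ ≤ Real.cos (x*θ - θ/2) * R ^ x :=
              mul_le_mul_of_nonneg_left h4 (hcospos.le.trans h5)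
          _ = R ^ x * Real.cos (x*θ - θ/2) := mul_comm _ _
    calc Real.cos (|θ|/2) * min 1 R * (μ (Set.Icc (0:ℝ) 1)).toReal
        = ∫ _x in Set.Icc (0:ℝ) 1, Real.cos (|θ|/2) * min 1 R ∂μ := by
          rw [setIntegral_const, smul_eq_mul, mul_comm]; rfl
      _ ≤ _ := h3
  have hlower : Real.cos (|θ|/2) * min 1 R * (μ (Set.Icc (0:ℝ) 1)).toReal
      ≤ ‖Phi μ s‖ := by
    calc Real.cos (|θ|/2) * min 1 R * (μ (Set.Icc (0:ℝ) 1)).toReal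
        ≤ (c * Phi μ s).re := hlower_re
      _ ≤ ‖c * Phi μ s‖ := Complex.re_le_norm _
      _ = ‖Phi μ s‖ := by rw [norm_mul, habs_c, one_mul]
  refine ⟨hlower, hupper, ?_⟩
  have hμpos : 0 < (μ (Set.Icc (0:ℝ) 1)).toReal := by
    have hne : μ (Set.Icc (0:ℝ) 1) ≠ 0 := by
      intro h
      apply hμ
      have : μ Set.univ = 0 := by
        have := measure_union_le (μ := μ) (Set.Icc (0:ℝ) 1) (Set.Icc (0:ℝ) 1)ᶜ
        rw [Set.union_compl_self, h, hsupp] at this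
        simpa using this
      exact Measure.measure_univ_eq_zero.mp this
    exact ENNReal.toReal_pos hne (measure_ne_top μ _)
  have hminpos : 0 < min 1 R := lt_min one_pos hR
  have habspos : 0 < ‖Phi μ s‖ :=
    lt_of_lt_of_le (mul_pos (mul_pos hcospos hminpos) hμpos) hlower
  intro h
  rw [h] at habspos
  simp at habspos
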